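/- There exists a standard partial label learning instance (a column-stochastic transition matrix T from labels to label sets) with 5 labels satisfying the small ambiguity degree condition (ambiguity degree γ = 1/2 < 1) whose transition matrix has rank 4 < 5 and is hence not left-invertible. -/

import Mathlib

noncomputable def Tmat : Matrix (Fin 4) (Fin 5) ℝ :=
  !![1/2, 1/2, 1/2, 0, 0;
     1/2, 0, 0, 1/2, 1/2;
     0, 1/2, 0, 0, 1/2;
     0, 0, 1/2, 1/2, 0]

def Ss : Fin 4 → Finset (Fin 5) := ![{0,1,2}, {0,3,4}, {1,4}, {2,3}]

noncomputable def Bmat : Matrix (Fin 4) (Fin 4) ℝ :=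
  !![1/2, 1/2, 1/2, 0;
     1/2, 0, 0, 1/2;
     0, 1/2, 0, 0;
     0, 0, 1/2, 1/2]

noncomputable def Emat : Matrix (Fin 5) (Fin 4) ℝ :=
  !![1,0,0,0; 0,1,0,0; 0,0,1,0; 0,0,0,1; 0,0,0,0]

lemma hB : Tmat * Emat = Bmat := by
  ext i j
  fin_cases i <;> fin_cases j <;>
    simp [Matrix.mul_apply, Fin.sum_univ_five, Tmat, Emat, Bmat,
      Matrix.vecHead, Matrix.vecTail, Fin.castSucc, Fin.ext_iff] <;> norm_num

lemma hBrank : Bmat.rank = 4 := by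
  have hdet : IsUnit Bmat.det := by
    rw [isUnit_iff_ne_zero]
    simp [Matrix.det_succ_row_zero, Fin.sum_univ_succ, Bmat, Fin.succAbove,
      Matrix.vecHead, Matrix.vecTail]
  rw [Matrix.rank_of_isUnit _ ((Matrix.isUnit_iff_isUnit_det _).mpr hdet)]
  simp

lemma hTle : Tmat.rank ≤ 4 := le_trans (Matrix.rank_le_card_height Tmat) (by simp)

lemma hTrank : Tmat.rank = 4 := by
  have h := Matrix.rank_mul_le_left Tmat Emat
  rw [hB, hBrank] at h
  have := hTle
  omega

set_option maxHeartbeats 1000000 in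
theorem stmt15 :
    ∃ (T : Matrix (Fin 4) (Fin 5) ℝ) (Sset : Fin 4 → Finset (Fin 5)),
      (∀ s y, 0 ≤ T s y) ∧
      (∀ y, ∑ s, T s y = 1) ∧
      (∀ s y, T s y ≠ 0 → y ∈ Sset s) ∧
      (∀ y y' : Fin 5, y ≠ y' →
        (∑ s, if y' ∈ Sset s then T s y else 0) ≤ 1 / 2) ∧
      (∃ y y' : Fin 5, y ≠ y' ∧
        (∑ s, if y' ∈ Sset s then T s y else 0) = 1 / 2) ∧
      T.rank = 4 ∧
      ¬∃ P : Matrix (Fin 5) (Fin 4) ℝ, P * T = 1 := by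
  refine ⟨Tmat, Ss, ?_, ?_, ?_, ?_, ?_, hTrank, ?_⟩
  · intro s y; fin_cases s <;> fin_cases y <;>
      norm_num [Tmat, Matrix.vecHead, Matrix.vecTail]
  · intro y; fin_cases y <;>
      norm_num [Tmat, Fin.sum_univ_succ, Matrix.vecHead, Matrix.vecTail]
  · intro s y h; fin_cases s <;> fin_cases y <;>
      simp_all [Tmat, Ss, Matrix.vecHead, Matrix.vecTail]
  · intro y y' h
    fin_cases y <;> fin_cases y' <;>
      simp_all [Tmat, Ss, Fin.sum_univ_four, Matrix.vecHead, Matrix.vecTail] <;>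
      norm_num
  · refine ⟨0, 1, by decide, ?_⟩
    norm_num [Tmat, Ss, Fin.sum_univ_succ, Matrix.vecHead, Matrix.vecTail]
    refine ⟨by decide, by decide⟩
  · rintro ⟨P, hP⟩
    have h1 : (P * Tmat).rank ≤ Tmat.rank := Matrix.rank_mul_le_right P Tmat
    rw [hP, Matrix.rank_one] at h1
    rw [hTrank] at h1
    simp at h1
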